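/- Let Λ be a d×d real symmetric positive definite matrix and let s be an integer with 1 ≤ s ≤ d. Then: (a) for every d×d real symmetric positive semidefinite matrix X whose s-th largest eigenvalue is positive, log det^s(X) − tr(XΛ) ≤ −log det_s(Λ) − s; and (b) there exists a d×d real symmetric positive semidefinite matrix X attaining equality, so the supremum of log det^s(X) − tr(XΛ) over all positive semidefinite X equals −log det_s(Λ) − s. -/

import Mathlib

open Matrix Finset

noncomputable section

/-- `lam` lists the eigenvalues (with multiplicity) of the real symmetric matrix `X`,
via an orthogonal spectral decomposition. -/
def IsSpectralDecomp {m : Type*} [Fintype m] [DecidableEq m]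
    (X : Matrix m m ℝ) (lam : m → ℝ) : Prop :=
  ∃ Q : Matrix m m ℝ, Q * Qᵀ = 1 ∧ X = Q * Matrix.diagonal lam * Qᵀ

/-- Principal submatrix `C_{S,S}`. -/
def subSub {n : ℕ} (C : Matrix (Fin n) (Fin n) ℝ) (S : Finset (Fin n)) :
    Matrix {i // i ∈ S} {i // i ∈ S} ℝ :=
  Matrix.of fun a b => C a.1 b.1

/-- The value `λ_{i+1}` (1-based), i.e. the coordinate of `lam` of 0-based index `i`;
`0` when out of range. -/
def extVal {d : ℕ} (lam : Fin d → ℝ) : ℕ → ℝ :=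
  fun i => if h : i < d then lam ⟨i, h⟩ else 0

/-- `∑_{i=k+1}^d λ_i` (1-based), i.e. the sum of the coordinates of 0-based index `≥ k`. -/
def tailSum {d : ℕ} (lam : Fin d → ℝ) (k : ℕ) : ℝ :=
  ∑ i ∈ Finset.univ.filter (fun i : Fin d => k ≤ (i : ℕ)), lam i

/-- `k = k(λ, s)`: an integer `0 ≤ k < s` with
`λ_k > (1/(s-k)) ∑_{i=k+1}^d λ_i ≥ λ_{k+1}`, with the convention `λ₀ = +∞`. -/
def IsKIndex {d : ℕ} (lam : Fin d → ℝ) (s k : ℕ) : Prop :=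
  k < s ∧ extVal lam k ≤ tailSum lam k / ((s : ℝ) - k) ∧
    (k = 0 ∨ tailSum lam k / ((s : ℝ) - k) < extVal lam (k - 1))

/-- `P` is the Moore–Penrose pseudoinverse of `X`. -/
def IsPseudoInv {d : ℕ} (X P : Matrix (Fin d) (Fin d) ℝ) : Prop :=
  X * P * X = X ∧ P * X * P = P ∧ (X * P)ᵀ = X * P ∧ (P * X)ᵀ = P * X


private lemma bathtub_aux {d s : ℕ} (hs1 : 1 ≤ s) (hsd : s ≤ d) (a t : Fin d → ℝ)
    (ha : Antitone a) (ht0 : ∀ j, 0 ≤ t j) (ht1 : ∀ j, t j ≤ 1)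
    (hts : ∑ j, t j = s) :
    ∑ j ∈ Finset.univ.filter (fun j : Fin d => d - s ≤ (j : ℕ)), a j ≤ ∑ j, t j * a j := by
  have hds : d - s < d := by omega
  set m : ℝ := a ⟨d - s, hds⟩ with hm
  set S : Finset (Fin d) := Finset.univ.filter (fun j : Fin d => d - s ≤ (j : ℕ)) with hS
  set Sc : Finset (Fin d) := Finset.univ.filter (fun j : Fin d => ¬ (d - s ≤ (j : ℕ))) with hSc
  have hcardS : S.card = s := by
    rw [hS, Finset.card_filter,
      Fin.sum_univ_eq_sum_range (fun i => if d - s ≤ i then 1 else 0), ← Finset.card_filter]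
    have : Finset.filter (fun i => d - s ≤ i) (Finset.range d) = Finset.Ico (d-s) d := by
      ext i; simp only [Finset.mem_filter, Finset.mem_range, Finset.mem_Ico]; omega
    rw [this, Nat.card_Ico]; omega
  have haS : ∀ j ∈ S, a j ≤ m := by
    intro j hj
    rw [hS, Finset.mem_filter] at hj
    exact ha (by exact hj.2)
  have haSc : ∀ j ∈ Sc, m ≤ a j := by
    intro j hj
    rw [hSc, Finset.mem_filter] at hj
    have := hj.2
    exact ha (by simp only [Fin.le_def]; omega)
  have hsplit : ∑ j ∈ S, t j + ∑ j ∈ Sc, t j = s := by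
    rw [hS, hSc, Finset.sum_filter_add_sum_filter_not]; exact hts
  have key : ∑ j ∈ S, (1 - t j) * m = (∑ j ∈ Sc, t j) * m := by
    rw [← Finset.sum_mul]
    congr 1
    rw [Finset.sum_sub_distrib, Finset.sum_const, hcardS]
    simp only [nsmul_eq_mul, mul_one]
    linarith
  calc ∑ j ∈ S, a j
      = ∑ j ∈ S, (1 - t j) * a j + ∑ j ∈ S, t j * a j := by
        rw [← Finset.sum_add_distrib]; apply Finset.sum_congr rfl; intros; ring
    _ ≤ ∑ j ∈ S, (1 - t j) * m + ∑ j ∈ S, t j * a j := by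
        refine add_le_add (Finset.sum_le_sum fun j hj => ?_) le_rfl
        exact mul_le_mul_of_nonneg_left (haS j hj) (by linarith [ht1 j])
    _ = (∑ j ∈ Sc, t j) * m + ∑ j ∈ S, t j * a j := by rw [key]
    _ ≤ (∑ j ∈ Sc, t j * a j) + ∑ j ∈ S, t j * a j := by
        refine add_le_add ?_ le_rfl
        rw [Finset.sum_mul]
        refine Finset.sum_le_sum fun j hj => ?_
        exact mul_le_mul_of_nonneg_left (haSc j hj) (ht0 j)
    _ = ∑ j, t j * a j := by
        rw [add_comm, hS, hSc, Finset.sum_filter_add_sum_filter_not]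

private lemma cardT_aux {d s : ℕ} (hsd : s ≤ d) :
    (Finset.univ.filter (fun i : Fin d => (i : ℕ) < s)).card = s := by
  rw [Finset.card_filter, Fin.sum_univ_eq_sum_range (fun i => if i < s then 1 else 0),
    ← Finset.card_filter]
  have : Finset.filter (fun i => i < s) (Finset.range d) = Finset.range s := by
    ext i; simp only [Finset.mem_filter, Finset.mem_range]; omega
  rw [this, Finset.card_range]

private lemma conj_diag_apply_aux {d : ℕ} (Q : Matrix (Fin d) (Fin d) ℝ) (v : Fin d → ℝ)
    (a b : Fin d) :
    (Q * Matrix.diagonal v * Qᵀ) a b = ∑ k, Q a k * v k * Q b k := by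
  rw [Matrix.mul_apply]
  exact Finset.sum_congr rfl fun k _ => by rw [Matrix.mul_diagonal]; simp [Matrix.transpose_apply]

/-- For a symmetric positive definite `Λ`,
`max_{X ⪰ 0} { log det^s(X) − tr(XΛ) } = − log det_s(Λ) − s`:
(a) every PSD `X` whose `s`-th largest eigenvalue is positive satisfies the inequality, and
(b) some PSD `X` attains equality. -/
theorem stmt_2 (d s : ℕ) (hs1 : 1 ≤ s) (hsd : s ≤ d)
    (Lam : Matrix (Fin d) (Fin d) ℝ) (beta : Fin d → ℝ)
    (hsort : Antitone beta) (hpos : ∀ i, 0 < beta i)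
    (hdecomp : IsSpectralDecomp Lam beta) :
    (∀ (X : Matrix (Fin d) (Fin d) ℝ) (lam : Fin d → ℝ),
        Antitone lam → (∀ i, 0 ≤ lam i) → IsSpectralDecomp X lam →
        0 < extVal lam (s - 1) →
        Real.log (∏ i ∈ Finset.univ.filter (fun i : Fin d => (i : ℕ) < s), lam i)
            - Matrix.trace (X * Lam)
          ≤ - Real.log (∏ i ∈ Finset.univ.filter (fun i : Fin d => d - s ≤ (i : ℕ)), beta i)
            - s) ∧
    (∃ (X : Matrix (Fin d) (Fin d) ℝ) (lam : Fin d → ℝ),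
        Antitone lam ∧ (∀ i, 0 ≤ lam i) ∧ IsSpectralDecomp X lam ∧
        0 < extVal lam (s - 1) ∧
        Real.log (∏ i ∈ Finset.univ.filter (fun i : Fin d => (i : ℕ) < s), lam i)
            - Matrix.trace (X * Lam)
          = - Real.log (∏ i ∈ Finset.univ.filter (fun i : Fin d => d - s ≤ (i : ℕ)), beta i)
            - s) := by
  obtain ⟨Q, hQ, hLeq⟩ := hdecomp
  have hQ' : Qᵀ * Q = 1 := mul_eq_one_comm.mp hQ
  constructor
  · -- Part (a)
    intro X lam hlanti hlnn hXdec hext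
    obtain ⟨R, hR, hXeq⟩ := hXdec
    simp only [extVal] at hext
    have hR' : Rᵀ * R = 1 := mul_eq_one_comm.mp hR
    set A : Matrix (Fin d) (Fin d) ℝ := Rᵀ * Q with hA
    set w : Fin d → Fin d → ℝ := fun i j => A i j * A i j with hw
    set c : Fin d → ℝ := fun i => ∑ j, beta j * w i j with hc
    set T : Finset (Fin d) := Finset.univ.filter (fun i : Fin d => (i : ℕ) < s) with hT
    set S : Finset (Fin d) := Finset.univ.filter (fun i : Fin d => d - s ≤ (i : ℕ)) with hS
    have hw0 : ∀ i j, 0 ≤ w i j := fun i j => mul_self_nonneg _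
    have hAAt : A * Aᵀ = 1 := by
      rw [hA, Matrix.transpose_mul, Matrix.transpose_transpose]
      calc Rᵀ * Q * (Qᵀ * R) = Rᵀ * (Q * Qᵀ) * R := by
            simp only [Matrix.mul_assoc]
        _ = 1 := by rw [hQ, Matrix.mul_one, hR']
    have hAtA : Aᵀ * A = 1 := by
      rw [hA, Matrix.transpose_mul, Matrix.transpose_transpose]
      calc Qᵀ * R * (Rᵀ * Q) = Qᵀ * (R * Rᵀ) * Q := by
            simp only [Matrix.mul_assoc]
        _ = 1 := by rw [hR, Matrix.mul_one, hQ']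
    have hrow : ∀ i, ∑ j, w i j = 1 := by
      intro i
      have h := congrFun (congrFun hAAt i) i
      rw [Matrix.mul_apply] at h
      simpa [Matrix.transpose_apply, Matrix.one_apply, hw] using h
    have hcol : ∀ j, ∑ i, w i j = 1 := by
      intro j
      have h := congrFun (congrFun hAtA j) j
      rw [Matrix.mul_apply] at h
      simp only [Matrix.transpose_apply, Matrix.one_apply_eq] at h
      rw [hw]
      convert h using 1
    have htr : Matrix.trace (X * Lam) = ∑ i, lam i * c i := by
      have e1 : Matrix.trace (X * Lam)
          = Matrix.trace (Matrix.diagonal lam * (A * (Matrix.diagonal beta * Aᵀ))) := by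
        rw [hXeq, hLeq]
        rw [show R * Matrix.diagonal lam * Rᵀ * (Q * Matrix.diagonal beta * Qᵀ)
            = R * (Matrix.diagonal lam * Rᵀ * (Q * Matrix.diagonal beta * Qᵀ)) from by
          simp only [Matrix.mul_assoc]]
        rw [Matrix.trace_mul_comm]
        congr 1
        rw [hA]
        simp only [Matrix.transpose_mul, Matrix.transpose_transpose, Matrix.mul_assoc]
      rw [e1, Matrix.trace]
      refine Finset.sum_congr rfl fun i _ => ?_
      rw [Matrix.diag_apply, Matrix.diagonal_mul]
      congr 1
      rw [Matrix.mul_apply, hc]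
      refine Finset.sum_congr rfl fun j _ => ?_
      simp only [Matrix.diagonal_mul, Matrix.transpose_apply, hw]
      ring
    have hd1 : 0 < d := by omega
    have hbmin : ∀ j : Fin d, beta ⟨d-1, by omega⟩ ≤ beta j := by
      intro j
      exact hsort (by simp only [Fin.le_def]; have := j.isLt; omega)
    have hcpos : ∀ i, 0 < c i := by
      intro i
      have h1 : beta ⟨d-1, by omega⟩ * 1 ≤ c i := by
        rw [← hrow i, Finset.mul_sum, hc]
        exact Finset.sum_le_sum fun j _ => mul_le_mul_of_nonneg_right (hbmin j) (hw0 i j)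
      have := hpos ⟨d-1, by omega⟩
      nlinarith
    have hlamT : ∀ i ∈ T, 0 < lam i := by
      intro i hi
      rw [hT, Finset.mem_filter] at hi
      have hs1d : s - 1 < d := by omega
      rw [dif_pos hs1d] at hext
      exact lt_of_lt_of_le hext (hlanti (by simp only [Fin.le_def]; omega))
    have hstep2 : ∀ i ∈ T, Real.log (lam i) ≤ lam i * c i - Real.log (c i) - 1 := by
      intro i hi
      have h := Real.log_le_sub_one_of_pos (mul_pos (hlamT i hi) (hcpos i))
      rw [Real.log_mul (hlamT i hi).ne' (hcpos i).ne'] at h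
      linarith
    have hjensen : ∀ i, ∑ j, w i j * Real.log (beta j) ≤ Real.log (c i) := by
      intro i
      have h := (strictConcaveOn_log_Ioi.concaveOn).le_map_sum
        (t := Finset.univ) (w := w i) (p := beta)
        (fun j _ => hw0 i j) (hrow i) (fun j _ => Set.mem_Ioi.mpr (hpos j))
      simp only [smul_eq_mul] at h
      have hceq : c i = ∑ j, w i j * beta j := by
        rw [hc]; exact Finset.sum_congr rfl fun j _ => mul_comm _ _
      rw [hceq]
      exact h
    set tw : Fin d → ℝ := fun j => ∑ i ∈ T, w i j with htw
    have ht0 : ∀ j, 0 ≤ tw j := fun j => Finset.sum_nonneg fun i _ => hw0 i j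
    have ht1 : ∀ j, tw j ≤ 1 := by
      intro j
      rw [htw, ← hcol j]
      exact Finset.sum_le_sum_of_subset_of_nonneg (Finset.subset_univ T) fun i _ _ => hw0 i j
    have hcT : T.card = s := cardT_aux hsd
    have hts : ∑ j, tw j = s := by
      rw [htw, Finset.sum_comm]
      rw [Finset.sum_congr rfl fun i (_ : i ∈ T) => hrow i, Finset.sum_const, hcT]
      simp
    have hswap : ∑ i ∈ T, ∑ j, w i j * Real.log (beta j) = ∑ j, tw j * Real.log (beta j) := by
      rw [Finset.sum_comm]
      exact Finset.sum_congr rfl fun j _ => by rw [htw, Finset.sum_mul]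
    have hbath : ∑ j ∈ S, Real.log (beta j) ≤ ∑ j, tw j * Real.log (beta j) := by
      refine bathtub_aux hs1 hsd _ tw ?_ ht0 ht1 hts
      intro x y hxy
      exact Real.log_le_log (hpos y) (hsort hxy)
    have hlogT : Real.log (∏ i ∈ T, lam i) = ∑ i ∈ T, Real.log (lam i) :=
      Real.log_prod fun i hi => (hlamT i hi).ne'
    have hlogS : Real.log (∏ j ∈ S, beta j) = ∑ j ∈ S, Real.log (beta j) :=
      Real.log_prod fun j _ => (hpos j).ne'
    have F1 : ∑ i ∈ T, Real.log (lam i)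
        ≤ ∑ i ∈ T, (lam i * c i) - ∑ i ∈ T, Real.log (c i) - s := by
      have := Finset.sum_le_sum hstep2
      rw [Finset.sum_sub_distrib, Finset.sum_sub_distrib, Finset.sum_const, hcT] at this
      simpa using this
    have F2 : ∑ i ∈ T, lam i * c i ≤ Matrix.trace (X * Lam) := by
      rw [htr]
      exact Finset.sum_le_sum_of_subset_of_nonneg (Finset.subset_univ T)
        fun i _ _ => mul_nonneg (hlnn i) (hcpos i).le
    have F3 : ∑ j ∈ S, Real.log (beta j) ≤ ∑ i ∈ T, Real.log (c i) := by
      calc ∑ j ∈ S, Real.log (beta j) ≤ ∑ j, tw j * Real.log (beta j) := hbath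
        _ = ∑ i ∈ T, ∑ j, w i j * Real.log (beta j) := hswap.symm
        _ ≤ ∑ i ∈ T, Real.log (c i) := Finset.sum_le_sum fun i _ => hjensen i
    rw [hlogT, hlogS]
    linarith
  · -- Part (b)
    set mu : Fin d → ℝ := fun i => if d - s ≤ (i : ℕ) then (beta i)⁻¹ else 0 with hmu
    set lam : Fin d → ℝ := fun j => mu (Fin.rev j) with hlam
    have hrevval : ∀ j : Fin d, (Fin.rev j : ℕ) = d - 1 - (j : ℕ) := fun j => by
      simp [Fin.rev]; omega
    have hiff : ∀ j : Fin d, (d - s ≤ ((Fin.rev j) : ℕ)) ↔ (j : ℕ) < s := by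
      intro j; rw [hrevval]; have := j.isLt; omega
    have hlam_eq : ∀ j : Fin d, lam j = if (j : ℕ) < s then (beta (Fin.rev j))⁻¹ else 0 := by
      intro j; rw [hlam, hmu]; simp only [hiff]
    have hanti : Antitone lam := by
      intro x y hxy
      rw [hlam_eq, hlam_eq]
      by_cases hy : (y : ℕ) < s
      · have hx : (x : ℕ) < s := lt_of_le_of_lt (by exact_mod_cast hxy) hy
        rw [if_pos hx, if_pos hy]
        have h1 : Fin.rev y ≤ Fin.rev x := Fin.rev_le_rev.mpr hxy
        exact inv_anti₀ (hpos _) (hsort h1)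
      · rw [if_neg hy]
        split
        · exact inv_nonneg.mpr (hpos _).le
        · exact le_refl 0
    have hnonneg : ∀ i, 0 ≤ lam i := by
      intro i; rw [hlam_eq]; split
      · exact inv_nonneg.mpr (hpos _).le
      · exact le_refl 0
    set X : Matrix (Fin d) (Fin d) ℝ := Q * Matrix.diagonal mu * Qᵀ with hX
    refine ⟨X, lam, hanti, hnonneg, ⟨Q.submatrix id Fin.rev, ?_, ?_⟩, ?_, ?_⟩
    · ext a b
      rw [Matrix.mul_apply]
      simp only [Matrix.transpose_apply, Matrix.submatrix_apply, id]
      rw [← hQ, Matrix.mul_apply]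
      exact Fintype.sum_bijective Fin.rev (Fin.rev_bijective) _ _ (fun j => rfl)
    · ext a b
      have h1 : (Q.submatrix id Fin.rev * Matrix.diagonal lam * (Q.submatrix id Fin.rev)ᵀ) a b
          = ∑ j, Q a (Fin.rev j) * mu (Fin.rev j) * Q b (Fin.rev j) := by
        rw [conj_diag_apply_aux]
        exact Finset.sum_congr rfl fun j _ => by simp [Matrix.submatrix_apply, hlam]
      rw [hX, conj_diag_apply_aux, h1]
      exact (Fintype.sum_bijective Fin.rev (Fin.rev_bijective) _ _ (fun j => rfl)).symm
    · have hs1d : s - 1 < d := by omega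
      simp only [extVal]
      rw [dif_pos hs1d, hlam_eq]
      rw [if_pos (by simp; omega)]
      exact inv_pos.mpr (hpos _)
    · have htr : Matrix.trace (X * Lam) = ∑ i, mu i * beta i := by
        rw [hX, hLeq]
        have heq : Q * Matrix.diagonal mu * Qᵀ * (Q * Matrix.diagonal beta * Qᵀ)
            = Q * (Matrix.diagonal mu * Matrix.diagonal beta) * Qᵀ := by
          calc Q * Matrix.diagonal mu * Qᵀ * (Q * Matrix.diagonal beta * Qᵀ)
              = Q * Matrix.diagonal mu * (Qᵀ * Q) * (Matrix.diagonal beta * Qᵀ) := by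
                simp only [Matrix.mul_assoc]
            _ = Q * (Matrix.diagonal mu * Matrix.diagonal beta) * Qᵀ := by
                rw [hQ', Matrix.mul_one]
                simp only [Matrix.mul_assoc]
        rw [heq, Matrix.trace_mul_cycle, ← Matrix.mul_assoc, hQ', Matrix.one_mul,
          Matrix.diagonal_mul_diagonal, Matrix.trace_diagonal]
      have hcardS : (Finset.univ.filter (fun i : Fin d => d - s ≤ (i : ℕ))).card = s := by
        rw [Finset.card_filter,
          Fin.sum_univ_eq_sum_range (fun i => if d - s ≤ i then 1 else 0), ← Finset.card_filter]
        have : Finset.filter (fun i => d - s ≤ i) (Finset.range d) = Finset.Ico (d-s) d := by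
          ext i; simp only [Finset.mem_filter, Finset.mem_range, Finset.mem_Ico]; omega
        rw [this, Nat.card_Ico]; omega
      have htr' : Matrix.trace (X * Lam) = s := by
        rw [htr, ← Finset.sum_filter_add_sum_filter_not Finset.univ
          (fun i : Fin d => d - s ≤ (i : ℕ))]
        have h1 : ∑ i ∈ Finset.univ.filter (fun i : Fin d => d - s ≤ (i : ℕ)), mu i * beta i
            = ∑ i ∈ Finset.univ.filter (fun i : Fin d => d - s ≤ (i : ℕ)), (1:ℝ) := by
          refine Finset.sum_congr rfl fun i hi => ?_
          rw [Finset.mem_filter] at hi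
          rw [hmu]
          simp only [if_pos hi.2]
          exact inv_mul_cancel₀ (hpos i).ne'
        have h2 : ∑ i ∈ Finset.univ.filter (fun i : Fin d => ¬ (d - s ≤ (i : ℕ))), mu i * beta i
            = 0 := by
          refine Finset.sum_eq_zero fun i hi => ?_
          rw [Finset.mem_filter] at hi
          show (if d - s ≤ (i:ℕ) then (beta i)⁻¹ else 0) * beta i = 0
          rw [if_neg hi.2, zero_mul]
        rw [h1, h2, Finset.sum_const, hcardS]
        simp
      have hprod : (∏ i ∈ Finset.univ.filter (fun i : Fin d => (i : ℕ) < s), lam i)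
          = (∏ i ∈ Finset.univ.filter (fun i : Fin d => d - s ≤ (i : ℕ)), beta i)⁻¹ := by
        rw [← Finset.prod_inv_distrib]
        refine Finset.prod_nbij' Fin.rev Fin.rev ?_ ?_ ?_ ?_ ?_
        · intro j hj; rw [Finset.mem_filter] at *; exact ⟨Finset.mem_univ _, (hiff j).mpr hj.2⟩
        · intro i hi; rw [Finset.mem_filter] at *
          refine ⟨Finset.mem_univ _, ?_⟩
          have h := (hiff (Fin.rev i))
          rw [Fin.rev_rev] at h
          exact h.mp hi.2
        · intro j _; exact Fin.rev_rev j
        · intro i _; exact Fin.rev_rev i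
        · intro j hj
          rw [Finset.mem_filter] at hj
          rw [hlam_eq, if_pos hj.2]
      rw [htr', hprod, Real.log_inv]
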